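/- arXiv:2401.07916 — 2 statements merged into one kernel-verified Lean document; each statement's English description precedes it below -/
import Mathlib

section
/- The Bergman fan of a loopless matroid M of rank r+1 is balanced with unit weights: for every flag F of proper flats of M omitting exactly one rank i (with 0 < i < r+1), the sum Σ_F e_{F − F_{i−1}} over all rank-i flats F with F_{i−1} ⊊ F ⊊ F_{i+1} equals e_{F_{i+1} − F_{i−1}} in ℝ^E/ℝe_E, which lies in the span of the rays of the flag. -/
open scoped Classical
open Finset Polynomial

/-- A matroid on the finite ground type `E`, given by its rank function. -/
structure FinRankMatroid (E : Type*) [Fintype E] [DecidableEq E] where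
  r : Finset E → ℕ
  r_le_card : ∀ A : Finset E, r A ≤ A.card
  mono : ∀ ⦃A B : Finset E⦄, A ⊆ B → r A ≤ r B
  submod : ∀ A B : Finset E, r (A ∪ B) + r (A ∩ B) ≤ r A + r B

variable {E : Type*} [Fintype E] [DecidableEq E]

/-- The (Whitney-form) characteristic polynomial of the rank function `rk`
with ground set `G`:  `χ(q) = Σ_{A ⊆ G} (-1)^{|A|} q^{rk(G) - rk(A)}`. -/
noncomputable def charPoly (rk : Finset E → ℕ) (G : Finset E) : Polynomial ℤ :=
  ∑ A ∈ G.powerset, (-1 : Polynomial ℤ) ^ A.card * X ^ (rk G - rk A)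

/-- `F` is a flat of the rank function `rk`: adding any new element raises the rank. -/
def IsFlat (rk : Finset E → ℕ) (F : Finset E) : Prop :=
  ∀ e ∉ F, rk F < rk (insert e F)

/-- The indicator vector `e_S ∈ ℝ^E` of a subset `S ⊆ E`. -/
noncomputable def eVec (S : Finset E) : E → ℝ := fun x => if x ∈ S then 1 else 0

lemma rk_insert_le (M : FinRankMatroid E) (S : Finset E) (e : E) :
    M.r (insert e S) ≤ M.r S + 1 := by
  have h := M.submod S {e}
  have h1 : M.r {e} ≤ 1 := by simpa using M.r_le_card {e}
  have hu : S ∪ {e} = insert e S := by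
    rw [Finset.union_comm]; exact (Finset.insert_eq e S).symm
  rw [hu] at h
  omega

lemma flat_closed (M : FinRankMatroid E) {S B : Finset E} {e : E} (hSB : S ⊆ B)
    (hB : IsFlat M.r B) (he : M.r (insert e S) = M.r S) : e ∈ B := by
  by_contra h
  have h1 := hB e h
  have hsub := M.submod (insert e S) B
  have hu : insert e S ∪ B = insert e B := by
    rw [Finset.insert_union, Finset.union_eq_right.mpr hSB]
  rw [hu] at hsub
  have hi : S ⊆ insert e S ∩ B := fun y hy =>
    Finset.mem_inter.mpr ⟨Finset.mem_insert_of_mem hy, hSB hy⟩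
  have h2 := M.mono hi
  omega

lemma rk_union (M : FinRankMatroid E) (S : Finset E) :
    ∀ T : Finset E, (∀ e ∈ T, M.r (insert e S) = M.r S) → M.r (S ∪ T) = M.r S := by
  intro T
  induction T using Finset.induction_on with
  | empty => simp
  | @insert e T hx ih =>
    intro h
    have hT : M.r (S ∪ T) = M.r S := ih fun y hy => h y (Finset.mem_insert_of_mem hy)
    have he : M.r (insert e S) = M.r S := h e (Finset.mem_insert_self _ _)
    have hsub := M.submod (insert e S) (S ∪ T)
    have hu : insert e S ∪ (S ∪ T) = S ∪ insert e T := by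
      ext y; simp only [Finset.mem_union, Finset.mem_insert]; tauto
    rw [hu] at hsub
    have hi : S ⊆ insert e S ∩ (S ∪ T) := fun y hy =>
      Finset.mem_inter.mpr ⟨Finset.mem_insert_of_mem hy, Finset.mem_union_left _ hy⟩
    have h2 := M.mono hi
    have h3 : M.r S ≤ M.r (S ∪ insert e T) := M.mono Finset.subset_union_left
    omega

/-- The closure of a set. -/
noncomputable def mcl (M : FinRankMatroid E) (S : Finset E) : Finset E :=
  S ∪ Finset.univ.filter (fun e => M.r (insert e S) = M.r S)

lemma subset_mcl (M : FinRankMatroid E) (S : Finset E) : S ⊆ mcl M S :=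
  Finset.subset_union_left

lemma mem_mcl_iff (M : FinRankMatroid E) (S : Finset E) (e : E) :
    e ∈ mcl M S ↔ M.r (insert e S) = M.r S := by
  unfold mcl
  simp only [Finset.mem_union, Finset.mem_filter, Finset.mem_univ, true_and]
  constructor
  · rintro (h | h)
    · rw [Finset.insert_eq_self.mpr h]
    · exact h
  · exact Or.inr

lemma rk_mcl (M : FinRankMatroid E) (S : Finset E) : M.r (mcl M S) = M.r S := by
  unfold mcl
  exact rk_union M S _ (fun e he => (Finset.mem_filter.mp he).2)

lemma mcl_flat (M : FinRankMatroid E) (S : Finset E) : IsFlat M.r (mcl M S) := by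
  intro e he
  have h1 : M.r S < M.r (insert e S) := by
    rcases lt_or_eq_of_le (M.mono (Finset.subset_insert e S)) with h | h
    · exact h
    · exact absurd ((mem_mcl_iff M S e).mpr h.symm) he
  have h2 : M.r (insert e S) ≤ M.r (insert e (mcl M S)) :=
    M.mono (Finset.insert_subset_insert e (subset_mcl M S))
  rw [rk_mcl]
  omega

lemma mcl_subset_flat (M : FinRankMatroid E) {S B : Finset E} (hSB : S ⊆ B)
    (hB : IsFlat M.r B) : mcl M S ⊆ B := by
  intro e he
  rw [mem_mcl_iff] at he
  exact flat_closed M hSB hB he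

lemma flat_rank_lt (M : FinRankMatroid E) {A F : Finset E} (hA : IsFlat M.r A)
    (h : A ⊂ F) : M.r A < M.r F := by
  obtain ⟨y, hyF, hyA⟩ := Finset.exists_of_ssubset h
  calc M.r A < M.r (insert y A) := hA y hyA
    _ ≤ M.r F := M.mono (Finset.insert_subset hyF h.subset)

theorem bergman_fan_balanced (M : FinRankMatroid E) (r : ℕ)
    (hrank : M.r Finset.univ = r + 1)
    (hloopless : ∀ e : E, 1 ≤ M.r {e})
    (A B : Finset E) (hA : IsFlat M.r A) (hB : IsFlat M.r B)
    (hAB : A ⊂ B) (hr2 : M.r B = M.r A + 2) :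
    (∑ F ∈ Finset.univ.powerset.filter (fun F => IsFlat M.r F ∧ A ⊂ F ∧ F ⊂ B),
        eVec (F \ A)) = eVec (B \ A) ∧
      eVec (B \ A) = eVec B - eVec A := by
  set Fam := Finset.univ.powerset.filter (fun F => IsFlat M.r F ∧ A ⊂ F ∧ F ⊂ B) with hFam
  -- key uniqueness: a flat F in Fam containing x ∉ A equals mcl M (insert x A)
  have key : ∀ x ∈ B, x ∉ A → ∀ F ∈ Fam, x ∈ F → F = mcl M (insert x A) := by
    intro x hxB hxA F hF hxF
    rw [hFam, Finset.mem_filter] at hF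
    obtain ⟨-, hFflat, hAF, hFB⟩ := hF
    have hrF : M.r F = M.r A + 1 := by
      have h1 := flat_rank_lt M hA hAF
      have h2 := flat_rank_lt M hFflat hFB
      omega
    have hins : insert x A ⊆ F := Finset.insert_subset hxF hAF.subset
    have hrins : M.r (insert x A) = M.r A + 1 := by
      have h1 := hA x hxA
      have h2 := rk_insert_le M A x
      omega
    apply Finset.Subset.antisymm
    · intro y hyF
      rw [mem_mcl_iff]
      have h1 : M.r (insert y (insert x A)) ≤ M.r F :=
        M.mono (Finset.insert_subset hyF hins)
      have h2 : M.r (insert x A) ≤ M.r (insert y (insert x A)) :=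
        M.mono (Finset.subset_insert _ _)
      omega
    · exact mcl_subset_flat M hins hFflat
  have hmem : ∀ x ∈ B, x ∉ A → mcl M (insert x A) ∈ Fam := by
    intro x hxB hxA
    have hins : insert x A ⊆ B := Finset.insert_subset hxB hAB.subset
    have hrins : M.r (insert x A) = M.r A + 1 := by
      have h1 := hA x hxA
      have h2 := rk_insert_le M A x
      omega
    have hsubB : mcl M (insert x A) ⊆ B := mcl_subset_flat M hins hB
    rw [hFam, Finset.mem_filter]
    refine ⟨Finset.mem_powerset.mpr (Finset.subset_univ _), mcl_flat M _, ?_, ?_⟩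
    · refine Finset.ssubset_of_ssubset_of_subset ?_ (subset_mcl M _)
      exact Finset.ssubset_insert hxA
    · refine lt_of_le_of_ne hsubB ?_
      intro h
      have := rk_mcl M (insert x A)
      rw [h] at this
      omega
  constructor
  · funext x
    rw [Finset.sum_apply]
    by_cases hxB : x ∈ B
    · by_cases hxA : x ∈ A
      · rw [Finset.sum_eq_zero, eVec]
        · simp [hxA]
        · intro F hF
          simp [eVec, hxA]
      · have hx1 : x ∈ mcl M (insert x A) := subset_mcl M _ (Finset.mem_insert_self _ _)
        rw [Finset.sum_eq_single (mcl M (insert x A))]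
        · simp [eVec, hx1, hxA, Finset.mem_sdiff, hxB]
        · intro F hF hne
          have hxF : x ∉ F := fun h => hne (key x hxB hxA F hF h)
          simp [eVec, Finset.mem_sdiff, hxF]
        · intro h
          exact absurd (hmem x hxB hxA) h
    · rw [Finset.sum_eq_zero]
      · simp [eVec, Finset.mem_sdiff, hxB]
      · intro F hF
        rw [hFam, Finset.mem_filter] at hF
        have hxF : x ∉ F := fun h => hxB (hF.2.2.2.subset h)
        simp [eVec, Finset.mem_sdiff, hxF]
  · funext x
    simp only [eVec, Pi.sub_apply, Finset.mem_sdiff]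
    by_cases hxA : x ∈ A
    · simp [hxA, hAB.subset hxA]
    · by_cases hxB : x ∈ B <;> simp [hxA, hxB]
end

section
/- Weisner's theorem: in a finite lattice L with Möbius function μ, for any atom a and for x ranging over elements with x ∨ a = 1̂, one has Σ_{x : x ∨ a = 1̂, x ≠ 1̂} μ(0̂, x) = −μ(0̂, 1̂); equivalently Σ_{x : x ∨ a = 1̂} μ(0̂, x) = 0. -/
open scoped Classical
open Finset

/-- **Weisner's theorem.** In a finite lattice `L` with `⊥ ≠ ⊤` and Möbius
function `μ(⊥,·)` (characterized by `Σ_{y ≤ x} μ(⊥,y) = [x = ⊥]`), for any atom `a`: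
`Σ_{x ⊔ a = ⊤, x ≠ ⊤} μ(⊥,x) = −μ(⊥,⊤)`, equivalently `Σ_{x ⊔ a = ⊤} μ(⊥,x) = 0`. -/
theorem weisner {L : Type*} [Lattice L] [BoundedOrder L] [Fintype L]
    (hbt : (⊥ : L) ≠ ⊤) (a : L) (ha : IsAtom a)
    (mu : L → ℤ)
    (hmu : ∀ x : L, (∑ y ∈ Finset.univ.filter (fun y => y ≤ x), mu y) =
      if x = ⊥ then 1 else 0) :
    (∑ x ∈ Finset.univ.filter (fun x => x ⊔ a = ⊤ ∧ x ≠ ⊤), mu x) = - mu ⊤ ∧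
      (∑ x ∈ Finset.univ.filter (fun x => x ⊔ a = ⊤), mu x) = 0 := by
  set N : L → ℤ := fun z => ∑ x ∈ Finset.univ.filter (fun x => x ⊔ a = z), mu x with hN
  -- key: for every w, Σ_{z ≤ w} N z = 0
  have key : ∀ w : L, (∑ z ∈ Finset.univ.filter (fun z => z ≤ w), N z) = 0 := by
    intro w
    have hmaps : ∀ x ∈ Finset.univ.filter (fun x : L => x ⊔ a ≤ w),
        x ⊔ a ∈ Finset.univ.filter (fun z : L => z ≤ w) := by
      intro x hx
      simp only [mem_filter, mem_univ, true_and] at hx ⊢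
      exact hx
    have hfib := Finset.sum_fiberwise_of_maps_to hmaps mu
    have hinner : ∀ z ∈ Finset.univ.filter (fun z : L => z ≤ w),
        (∑ x ∈ (Finset.univ.filter (fun x : L => x ⊔ a ≤ w)).filter
          (fun x => x ⊔ a = z), mu x) = N z := by
      intro z hz
      simp only [mem_filter, mem_univ, true_and] at hz
      congr 1
      ext x
      simp only [mem_filter, mem_univ, true_and]
      constructor
      · rintro ⟨_, h⟩; exact h
      · intro h; exact ⟨h ▸ hz, h⟩
    rw [Finset.sum_congr rfl hinner] at hfib
    rw [hfib]
    by_cases haw : a ≤ w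
    · have : Finset.univ.filter (fun x : L => x ⊔ a ≤ w)
          = Finset.univ.filter (fun x : L => x ≤ w) := by
        ext x; simp only [mem_filter, mem_univ, true_and, sup_le_iff]
        exact ⟨fun h => h.1, fun h => ⟨h, haw⟩⟩
      rw [this, hmu w, if_neg]
      intro hw
      exact ha.1 (le_antisymm (hw ▸ haw) bot_le)
    · have : Finset.univ.filter (fun x : L => x ⊔ a ≤ w) = ∅ := by
        ext x; simp only [mem_filter, mem_univ, true_and, sup_le_iff, notMem_empty,
          iff_false]
        intro h; exact haw h.2
      rw [this, Finset.sum_empty]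
  -- hence N w = 0 for all w, by strong induction
  have hN0 : ∀ w : L, N w = 0 := by
    intro w
    induction w using WellFoundedLT.induction with
    | ind w ih =>
      have hsplit : Finset.univ.filter (fun z : L => z ≤ w)
          = insert w (Finset.univ.filter (fun z : L => z < w)) := by
        ext z
        simp only [mem_filter, mem_univ, true_and, mem_insert]
        constructor
        · intro h
          rcases eq_or_lt_of_le h with h | h
          · exact Or.inl h
          · exact Or.inr h
        · rintro (rfl | h)
          · exact le_rfl
          · exact h.le
      have hw : w ∉ Finset.univ.filter (fun z : L => z < w) := by
        simp
      have := key w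
      rw [hsplit, Finset.sum_insert hw] at this
      rw [Finset.sum_eq_zero (fun z hz => ih z (by simpa using hz))] at this
      simpa using this
  have h2 : (∑ x ∈ Finset.univ.filter (fun x => x ⊔ a = ⊤), mu x) = 0 := hN0 ⊤
  refine ⟨?_, h2⟩
  have hsplit : Finset.univ.filter (fun x : L => x ⊔ a = ⊤)
      = insert ⊤ (Finset.univ.filter (fun x : L => x ⊔ a = ⊤ ∧ x ≠ ⊤)) := by
    ext x
    simp only [mem_filter, mem_univ, true_and, mem_insert]
    constructor
    · intro h
      by_cases hx : x = ⊤
      · exact Or.inl hx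
      · exact Or.inr ⟨h, hx⟩
    · rintro (rfl | ⟨h, _⟩)
      · simp
      · exact h
  have htop : (⊤ : L) ∉ Finset.univ.filter (fun x : L => x ⊔ a = ⊤ ∧ x ≠ ⊤) := by
    simp
  rw [hsplit, Finset.sum_insert htop] at h2
  linarith
end
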